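/- Let F be C¹ strictly convex on a convex open set U ⊆ ℝ^d, let P be a probability measure with P(U) = 1 having a finite first moment and with ∫|F| dP < ∞, and let m = ∫ ξ dP(ξ). Then m ∈ U and for every x ∈ U: ∫ φ_F(ξ, x) dP(ξ) = ∫ F dP − F(m) + φ_F(m, x). In particular the distortion G₁(x) = ∫ φ_F(ξ, x) dP(ξ) attains its unique minimum over U at x = m, with minimum value ∫ F dP − F(m). -/

import Mathlib

open scoped InnerProductSpace

private lemma strict_grad_ineq {d : ℕ} {U : Set (EuclideanSpace ℝ (Fin d))}
    (hUconv : Convex ℝ U)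
    {F : EuclideanSpace ℝ (Fin d) → ℝ}
    {f : EuclideanSpace ℝ (Fin d) → EuclideanSpace ℝ (Fin d)}
    (hconv : StrictConvexOn ℝ U F)
    {x y : EuclideanSpace ℝ (Fin d)} (hx : x ∈ U) (hy : y ∈ U) (hxy : x ≠ y)
    (hfx : HasGradientAt F (f x) x) :
    ⟪f x, y - x⟫_ℝ < F y - F x := by
  set v : EuclideanSpace ℝ (Fin d) := y - x with hv
  have hvne : v ≠ 0 := sub_ne_zero.mpr (Ne.symm hxy)
  set L : ℝ → EuclideanSpace ℝ (Fin d) := fun t => x + t • v with hLdef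
  have hLaff : ∀ (a b p q : ℝ), p + q = 1 → L (p * a + q * b) = p • L a + q • L b := by
    intro a b p q hpq
    have hxsplit : x = p • x + q • x := by rw [← add_smul, hpq, one_smul]
    simp only [hLdef]
    rw [add_smul, mul_smul, mul_smul, smul_add, smul_add]
    nth_rewrite 1 [hxsplit]; abel
  have hLinj : Function.Injective L := by
    intro a b hab
    have hab' : a • v = b • v := by
      have := hab
      simp only [hLdef] at this
      exact add_left_cancel this
    have : (a - b) • v = 0 := by rw [sub_smul, hab', sub_self]
    rcases smul_eq_zero.mp this with h | h
    · linarith [sub_eq_zero.mp (by linarith [h] : a - b = 0)]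
    · exact absurd h hvne
  have hS0 : (0 : ℝ) ∈ L ⁻¹' U := by simp [hLdef, hx]
  have hS1 : (1 : ℝ) ∈ L ⁻¹' U := by
    simp only [Set.mem_preimage, hLdef, one_smul, hv, add_sub_cancel]
    exact hy
  have hg : StrictConvexOn ℝ (L ⁻¹' U) (F ∘ L) := by
    constructor
    · intro a ha b hb p q hp hq hpq
      have h1 : L (p • a + q • b) = p • L a + q • L b := by
        simpa using hLaff a b p q hpq
      simp only [Set.mem_preimage] at *
      rw [h1]
      exact hUconv ha hb hp hq hpq
    · intro a ha b hb hab p q hp hq hpq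
      have h1 : L (p • a + q • b) = p • L a + q • L b := by
        simpa using hLaff a b p q hpq
      simp only [Set.mem_preimage] at ha hb
      have h2 : L a ≠ L b := fun h => hab (hLinj h)
      have h3 := hconv.2 ha hb h2 hp hq hpq
      simp only [Function.comp_apply, smul_eq_mul] at *
      rw [hLaff a b p q hpq]
      exact h3
  have hL0 : L 0 = x := by simp [hLdef]
  have hLd : HasDerivAt L v 0 := by
    have h1 : HasDerivAt (fun t : ℝ => t • v) ((1:ℝ) • v) 0 := (hasDerivAt_id 0).smul_const v
    have h2 := h1.const_add x
    rw [one_smul] at h2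
    exact h2
  have hFd : HasFDerivAt F (InnerProductSpace.toDual ℝ _ (f x)) (L 0) := by
    rw [hL0]; exact hfx.hasFDerivAt
  have hcomp : HasDerivAt (F ∘ L) (InnerProductSpace.toDual ℝ _ (f x) v) 0 :=
    hFd.comp_hasDerivAt 0 hLd
  have hslope := hg.lt_slope_of_hasDerivAt hS0 hS1 zero_lt_one hcomp
  have hL1 : L 1 = y := by simp [hLdef, hv]
  have : slope (F ∘ L) 0 1 = F y - F x := by
    rw [slope_def_field]
    simp [Function.comp_apply, hL0, hL1]
  rw [this] at hslope
  simpa using hslope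

noncomputable def bregman {d : ℕ} (F : EuclideanSpace ℝ (Fin d) → ℝ)
    (f : EuclideanSpace ℝ (Fin d) → EuclideanSpace ℝ (Fin d))
    (ξ x : EuclideanSpace ℝ (Fin d)) : ℝ :=
  F ξ - F x - ⟪f x, ξ - x⟫_ℝ

open MeasureTheory in
theorem stmt_9 {d : ℕ} (U : Set (EuclideanSpace ℝ (Fin d)))
    (hUopen : IsOpen U) (hUconv : Convex ℝ U) (hUne : U.Nonempty)
    (F : EuclideanSpace ℝ (Fin d) → ℝ)
    (f : EuclideanSpace ℝ (Fin d) → EuclideanSpace ℝ (Fin d))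
    (hF : ContDiffOn ℝ 1 F U)
    (hgrad : ∀ x ∈ U, HasGradientAt F (f x) x)
    (hconv : StrictConvexOn ℝ U F)
    (P : Measure (EuclideanSpace ℝ (Fin d))) [IsProbabilityMeasure P]
    (hPU : P U = 1)
    (hmom : Integrable (fun ξ => ξ) P)
    (hFint : Integrable F P) :
    (∫ ξ, ξ ∂P) ∈ U ∧
    (∀ x ∈ U,
      ∫ ξ, bregman F f ξ x ∂P =
        (∫ ξ, F ξ ∂P) - F (∫ ξ, ξ ∂P) + bregman F f (∫ ξ, ξ ∂P) x) ∧
    (∫ ξ, bregman F f ξ (∫ ξ, ξ ∂P) ∂P = (∫ ξ, F ξ ∂P) - F (∫ ξ, ξ ∂P)) ∧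
    (∀ x ∈ U, x ≠ (∫ ξ, ξ ∂P) →
      ∫ ξ, bregman F f ξ (∫ ξ, ξ ∂P) ∂P < ∫ ξ, bregman F f ξ x ∂P) := by
  set m : EuclideanSpace ℝ (Fin d) := ∫ ξ, ξ ∂P with hm
  have haeU : ∀ᵐ ξ ∂P, ξ ∈ U := by
    have hc : P Uᶜ = 0 := by
      have := measure_compl hUopen.measurableSet (measure_ne_top P U)
      rw [hPU, measure_univ] at this
      simpa using this
    rw [ae_iff]
    exact hc
  -- m ∈ U
  have hmU : m ∈ U := by
    by_contra hmnot
    obtain ⟨g, hg⟩ := geometric_hahn_banach_open_point hUconv hUopen hmnot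
    have hint : Integrable (fun ξ => g ξ) P := g.integrable_comp hmom
    have hIg : ∫ ξ, g ξ ∂P = g m := g.integral_comp_comm hmom
    have h0 : ∫ ξ, (g m - g ξ) ∂P = 0 := by
      rw [integral_sub (integrable_const _) hint, integral_const, hIg]
      simp
    have hnn : 0 ≤ᵐ[P] fun ξ => g m - g ξ :=
      haeU.mono fun ξ h => sub_nonneg.mpr (hg ξ h).le
    have hz :=
      (integral_eq_zero_iff_of_nonneg_ae hnn ((integrable_const _).sub hint)).mp h0
    obtain ⟨ξ, h1, h2⟩ := (hz.and haeU).exists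
    have := hg ξ h2
    simp only [Pi.zero_apply] at h1
    linarith
  -- integrability of the inner-product part
  have hinner : ∀ x : EuclideanSpace ℝ (Fin d),
      Integrable (fun ξ => ⟪f x, ξ - x⟫_ℝ) P := fun x =>
    (innerSL ℝ (f x)).integrable_comp (hmom.sub (integrable_const x))
  have hIinner : ∀ x : EuclideanSpace ℝ (Fin d),
      ∫ ξ, ⟪f x, ξ - x⟫_ℝ ∂P = ⟪f x, m - x⟫_ℝ := by
    intro x
    have hsub : Integrable (fun ξ : EuclideanSpace ℝ (Fin d) => ξ - x) P := by
      exact hmom.sub (integrable_const x)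
    rw [integral_inner hsub (f x)]
    congr 1
    rw [integral_sub hmom (integrable_const x), integral_const]
    simp [hm]
  have key : ∀ x : EuclideanSpace ℝ (Fin d),
      ∫ ξ, bregman F f ξ x ∂P = (∫ ξ, F ξ ∂P) - F x - ⟪f x, m - x⟫_ℝ := by
    intro x
    unfold bregman
    have h1 : Integrable (fun ξ => F ξ - F x) P := by
      exact hFint.sub (integrable_const (F x))
    rw [integral_sub (f := fun ξ => F ξ - F x)
        (g := fun ξ => ⟪f x, ξ - x⟫_ℝ) h1 (hinner x),
      integral_sub (f := fun ξ => F ξ) (g := fun _ => F x) hFint (integrable_const _),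
      integral_const, hIinner x]
    simp
  refine ⟨hmU, fun x _ => ?_, ?_, fun x hxU hxm => ?_⟩
  · rw [key x]
    unfold bregman
    ring
  · rw [key m]
    simp
  · have h1 : ∫ ξ, bregman F f ξ m ∂P = (∫ ξ, F ξ ∂P) - F m := by
      rw [key m]; simp
    have h2 := key x
    have h3 : ⟪f x, m - x⟫_ℝ < F m - F x :=
      strict_grad_ineq hUconv hconv hxU hmU hxm (hgrad x hxU)
    rw [h1, h2]
    linarith
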